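/- Let A be an n×m complex matrix, X an n×p complex matrix, and Y an m×q complex matrix. Define F := Yᴴ A⁺ X, where A⁺ denotes the Moore–Penrose pseudoinverse and ᴴ the conjugate transpose. Then the following are equivalent: (a) the subspace (A⁺)ᴴ·im(Y) + im(X)^⊥ equals ℂⁿ; (b) ((A⁺)ᴴ·im(Y))^⊥ ∩ im(X) = {0}; (c) ker(F) = ker(X). -/

import Mathlib

open Matrix

def IsMPInv {m n : Type*} [Fintype m] [Fintype n] (A : Matrix m n ℂ) (Z : Matrix n m ℂ) : Prop :=
  A * Z * A = A ∧ Z * A * Z = Z ∧ (A * Z)ᴴ = A * Z ∧ (Z * A)ᴴ = Z * A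

/-- For `F = Yᴴ A⁺ X`, the conditions (a) `(A⁺)ᴴ·im(Y) + im(X)ᗮ = ℂⁿ`,
(b) `((A⁺)ᴴ·im(Y))ᗮ ∩ im(X) = {0}`, and (c) `ker F = ker X` are equivalent. -/
theorem stmt0 {n m p q : ℕ}
    (A : Matrix (Fin n) (Fin m) ℂ) (X : Matrix (Fin n) (Fin p) ℂ)
    (Y : Matrix (Fin m) (Fin q) ℂ) (Ap : Matrix (Fin m) (Fin n) ℂ)
    (hAp : IsMPInv A Ap) (F : Matrix (Fin q) (Fin p) ℂ) (hF : F = Yᴴ * Ap * X) :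
    ((Submodule.map (Matrix.toEuclideanLin Apᴴ)
        (LinearMap.range (Matrix.toEuclideanLin Y))) ⊔
      (LinearMap.range (Matrix.toEuclideanLin X))ᗮ = ⊤
      ↔ (Submodule.map (Matrix.toEuclideanLin Apᴴ)
        (LinearMap.range (Matrix.toEuclideanLin Y)))ᗮ ⊓
        LinearMap.range (Matrix.toEuclideanLin X) = ⊥)
    ∧ ((Submodule.map (Matrix.toEuclideanLin Apᴴ)
        (LinearMap.range (Matrix.toEuclideanLin Y))) ⊔
      (LinearMap.range (Matrix.toEuclideanLin X))ᗮ = ⊤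
      ↔ LinearMap.ker (Matrix.toEuclideanLin F) = LinearMap.ker (Matrix.toEuclideanLin X)) := by
  classical
  set T := Submodule.map (Matrix.toEuclideanLin Apᴴ)
      (LinearMap.range (Matrix.toEuclideanLin Y)) with hT
  set R := LinearMap.range (Matrix.toEuclideanLin X) with hR
  have horth : (T ⊔ Rᗮ)ᗮ = Tᗮ ⊓ R := by
    rw [← Submodule.inf_orthogonal, Submodule.orthogonal_orthogonal]
  have hab : T ⊔ Rᗮ = ⊤ ↔ Tᗮ ⊓ R = ⊥ := by
    rw [← Submodule.orthogonal_eq_bot_iff, horth]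
  refine ⟨hab, hab.trans ?_⟩
  have hkey : ∀ x : EuclideanSpace ℂ (Fin p),
      Matrix.toEuclideanLin F x = 0 ↔ Matrix.toEuclideanLin X x ∈ Tᗮ := by
    intro x
    have hFx : Matrix.toEuclideanLin F x
        = Matrix.toEuclideanLin Yᴴ (Matrix.toEuclideanLin Ap (Matrix.toEuclideanLin X x)) := by
      simp [hF, Matrix.toEuclideanLin_apply, Matrix.mulVec_mulVec, Matrix.mul_assoc]
    rw [hFx]
    set w := Matrix.toEuclideanLin X x with hw
    constructor
    · intro h
      rw [Submodule.mem_orthogonal]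
      rintro u hu
      rw [hT] at hu
      obtain ⟨v, ⟨z, rfl⟩, rfl⟩ := hu
      rw [Matrix.toEuclideanLin_conjTranspose_eq_adjoint, LinearMap.adjoint_inner_left]
      have hrw : inner ℂ (Matrix.toEuclideanLin Y z) (Matrix.toEuclideanLin Ap w)
          = (inner ℂ z (Matrix.toEuclideanLin Yᴴ (Matrix.toEuclideanLin Ap w)) : ℂ) := by
        rw [Matrix.toEuclideanLin_conjTranspose_eq_adjoint (A := Y),
          LinearMap.adjoint_inner_right]
      rw [hrw, h, inner_zero_right]
    · intro h
      have h1 : inner ℂ (Matrix.toEuclideanLin Apᴴ (Matrix.toEuclideanLin Y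
            (Matrix.toEuclideanLin Yᴴ (Matrix.toEuclideanLin Ap w)))) w = (0 : ℂ) :=
        (Submodule.mem_orthogonal _ _).mp h _
          (Submodule.mem_map.mpr ⟨_, ⟨_, rfl⟩, rfl⟩)
      rw [← inner_self_eq_zero (𝕜 := ℂ)]
      rw [Matrix.toEuclideanLin_conjTranspose_eq_adjoint (A := Ap),
        LinearMap.adjoint_inner_left] at h1
      rw [Matrix.toEuclideanLin_conjTranspose_eq_adjoint (A := Y)] at h1
      rw [Matrix.toEuclideanLin_conjTranspose_eq_adjoint (A := Y)]
      have h2 : (inner ℂ (LinearMap.adjoint (Matrix.toEuclideanLin Y)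
              ((Matrix.toEuclideanLin Ap) w))
            (LinearMap.adjoint (Matrix.toEuclideanLin Y) ((Matrix.toEuclideanLin Ap) w)) : ℂ)
          = inner ℂ ((Matrix.toEuclideanLin Ap) w) ((Matrix.toEuclideanLin Y)
            (LinearMap.adjoint (Matrix.toEuclideanLin Y) ((Matrix.toEuclideanLin Ap) w))) :=
        LinearMap.adjoint_inner_left _ _ _
      rw [h2, ← inner_conj_symm, h1, map_zero]
  constructor
  · intro hb
    ext x
    simp only [LinearMap.mem_ker]
    constructor
    · intro hx
      have h1 : Matrix.toEuclideanLin X x ∈ Tᗮ ⊓ R :=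
        Submodule.mem_inf.mpr ⟨(hkey x).mp hx, ⟨x, rfl⟩⟩
      rw [hb] at h1
      simpa using h1
    · intro hx
      rw [hkey x, hx]
      exact Submodule.zero_mem _
  · intro hker
    rw [eq_bot_iff]
    intro v hv
    obtain ⟨hv1, hv2⟩ := Submodule.mem_inf.mp hv
    obtain ⟨x, rfl⟩ := hv2
    have hx : x ∈ LinearMap.ker (Matrix.toEuclideanLin F) := (hkey x).mpr hv1
    rw [hker] at hx
    simpa using hx
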